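/- Uniqueness of the proxy root for the one-dimensional subspace prior: Fix C > 0, q ∈ (0,1), γ ∈ (0,1), h > 0 and c > 0, and assume the strong-signal condition γ²h⁴ > c, so that σ²(0) > 0. Then there exist ε_r > 0 and δ* ∈ (0,1) such that for all r ∈ [0, ε_r] and all δ ∈ (0, δ*), the function F(t, δ, r) := (δ + (1−δ)·A(t)) / ((1−γ)·A(t) + γ·B(t; r)) − q is strictly decreasing in t on (0, C]; in particular the equation F(t, δ, r) = 0 has at most one solution t ∈ [0, C]. -/

import Mathlib

/-!
Uniqueness of the proxy root for the one-dimensional subspace prior: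
under the strong-signal condition `γ²h⁴ > c`, there exist `ε_r > 0` and `δ* ∈ (0,1)` such
that for all `r ∈ [0, ε_r]` and `δ ∈ (0, δ*)`, the proxy curve
`F(t, δ, r) = (δ + (1−δ)A(t)) / ((1−γ)A(t) + γ·A(t/s(r))) − q`
is strictly decreasing in `t` on `(0, C]`; in particular `F(·, δ, r) = 0` has at most one
solution on `[0, C]`.  Here `A(t) = 2Φ̄(√t)` is the χ²₁ survival function and
`s(r) = 1 + σ²(r)` with `σ²(r) = h²·max(0, 1 − c(1+r)/(γ²h⁴))/(1 + c/(γh²))`.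
-/

open MeasureTheory ProbabilityTheory Filter Real Set
open scoped NNReal

/-- The survival function `Φ̄` of the standard normal distribution. -/
noncomputable def stdNormSurvival (t : ℝ) : ℝ :=
  ((gaussianReal 0 1) (Set.Ici t)).toReal

noncomputable abbrev phi (x : ℝ) : ℝ := gaussianPDFReal 0 1 x

lemma stdNormSurvival_eq (t : ℝ) :
    stdNormSurvival t = ∫ x in Set.Ici t, phi x := by
  rw [stdNormSurvival, gaussianReal_apply_eq_integral 0 one_ne_zero,
    ENNReal.toReal_ofReal]
  exact setIntegral_nonneg measurableSet_Ici fun x _ => gaussianPDFReal_nonneg 0 1 x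

lemma phi_pos (x : ℝ) : 0 < phi x := gaussianPDFReal_pos 0 1 x one_ne_zero

lemma phi_cont : Continuous phi := by
  have : phi = fun x => (√(2 * π * (1:ℝ≥0)))⁻¹ * rexp (- (x - 0)^2 / (2 * (1:ℝ≥0))) :=
    gaussianPDFReal_def 0 1
  rw [this]
  fun_prop

lemma phi_integrable : Integrable phi := integrable_gaussianPDFReal 0 1

lemma phi_neg (x : ℝ) : phi (-x) = phi x := by
  simp [phi, gaussianPDFReal]

lemma phi_le (x : ℝ) : phi x ≤ 1 := by
  simp only [phi, gaussianPDFReal]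
  rw [NNReal.coe_one, mul_one]
  have h1 : (1:ℝ) ≤ √(2 * π) := by
    rw [show (1:ℝ) = √1 by simp]
    apply Real.sqrt_le_sqrt
    nlinarith [Real.pi_gt_three]
  calc (√(2 * π))⁻¹ * rexp (-(x - 0) ^ 2 / (2*1)) ≤ 1 * 1 := by
        apply mul_le_mul _ _ (Real.exp_nonneg _) zero_le_one
        · exact inv_le_one_of_one_le₀ h1
        · rw [Real.exp_le_one_iff]
          have := sq_nonneg (x - 0)
          nlinarith
    _ = 1 := by ring

lemma stdNormSurvival_pos (t : ℝ) : 0 < stdNormSurvival t := by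
  rw [stdNormSurvival_eq]
  refine (setIntegral_pos_iff_support_of_nonneg_ae ?_ phi_integrable.integrableOn).2 ?_
  · exact ae_of_all _ fun x => (phi_pos x).le
  · have : Function.support phi = Set.univ := by
      ext x; simp [Function.mem_support, (phi_pos x).ne']
    rw [this, Set.univ_inter]
    simp [Real.volume_Ici]

lemma stdNormSurvival_anti : Antitone stdNormSurvival := by
  intro a b hab
  rw [stdNormSurvival_eq, stdNormSurvival_eq]
  exact setIntegral_mono_set phi_integrable.integrableOn
    (ae_of_all _ fun x => (phi_pos x).le) (ae_of_all _ fun x hx => le_trans hab hx)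

lemma stdNormSurvival_zero : stdNormSurvival 0 = 1/2 := by
  have h1 : ∫ x in Iio (0:ℝ), phi x = ∫ x in Ici (0:ℝ), phi x := by
    have : ∫ x in Ioi (0:ℝ), phi (-x) = ∫ x in Iic (-(0:ℝ)), phi x :=
      integral_comp_neg_Ioi 0 phi
    simp only [phi_neg, neg_zero] at this
    rw [← integral_Ici_eq_integral_Ioi] at this
    rw [integral_Iic_eq_integral_Iio] at this
    exact this.symm
  have h2 : (∫ x in Iio (0:ℝ), phi x) + ∫ x in Ici (0:ℝ), phi x = ∫ x, phi x :=
    intervalIntegral.integral_Iio_add_Ici phi_integrable.integrableOn phi_integrable.integrableOn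
  rw [integral_gaussianPDFReal_eq_one 0 one_ne_zero, h1] at h2
  rw [stdNormSurvival_eq]
  linarith

lemma stdNormSurvival_shift (y c : ℝ) :
    ∫ u in Ici (y + c), phi (u - c) = stdNormSurvival y := by
  rw [stdNormSurvival_eq]
  have h := (measurePreserving_sub_right (volume : Measure ℝ) c).setIntegral_preimage_emb
    (MeasurableEquiv.subRight c).measurableEmbedding phi (Ici y)
  have hpre : (fun x : ℝ => x - c) ⁻¹' Ici y = Ici (y + c) := by
    ext u; simp [sub_le_iff_le_add', le_sub_iff_add_le, add_comm]
  rw [hpre] at h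
  exact h

lemma hazard_mono {y x : ℝ} (hy : 0 ≤ y) (hyx : y ≤ x) :
    phi y * stdNormSurvival x ≤ phi x * stdNormSurvival y := by
  set c := x - y with hc
  have hx : y + c = x := by ring
  rw [← stdNormSurvival_shift y c, hx]
  rw [stdNormSurvival_eq]
  rw [← integral_const_mul, ← integral_const_mul]
  apply setIntegral_mono_on
  · exact (phi_integrable.const_mul _).integrableOn
  · exact ((phi_integrable.comp_sub_right c).const_mul _).integrableOn
  · exact measurableSet_Ici
  · intro u hu
    simp only [mem_Ici] at hu
    simp only [phi, gaussianPDFReal]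
    have hK : (0:ℝ) < (√(2 * π * (1:ℝ≥0)))⁻¹ := by
      rw [inv_pos]
      apply Real.sqrt_pos.2
      positivity
    simp only [NNReal.coe_one, mul_one, sub_zero]
    rw [show ∀ a b : ℝ, (√(2*π))⁻¹ * rexp a * ((√(2*π))⁻¹ * rexp b)
        = (√(2*π))⁻¹ * (√(2*π))⁻¹ * rexp (a + b) by intros; rw [Real.exp_add]; ring]
    rw [show ∀ a b : ℝ, (√(2*π))⁻¹ * rexp a * ((√(2*π))⁻¹ * rexp b)
        = (√(2*π))⁻¹ * (√(2*π))⁻¹ * rexp (a + b) by intros; rw [Real.exp_add]; ring]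
    apply mul_le_mul_of_nonneg_left _ (by positivity)
    rw [Real.exp_le_exp]
    have h1 : 0 ≤ (u - x) * (x - y) := mul_nonneg (by linarith) (by linarith)
    nlinarith

lemma stdNormSurvival_sub (a b : ℝ) (hab : a ≤ b) :
    stdNormSurvival a - stdNormSurvival b = ∫ u in a..b, phi u := by
  rw [intervalIntegral.integral_of_le hab, stdNormSurvival_eq, stdNormSurvival_eq]
  have hsplit : Ici a = Ico a b ∪ Ici b := by
    rw [Ico_union_Ici_eq_Ici hab]
  rw [hsplit, setIntegral_union (by rw [Set.disjoint_iff]; intro u hu; exact absurd hu.2 (not_le.2 hu.1.2)) measurableSet_Ici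
    phi_integrable.integrableOn phi_integrable.integrableOn]
  rw [integral_Ico_eq_integral_Ioo, ← integral_Ioc_eq_integral_Ioo]
  ring

lemma stdNormSurvival_eq_sub_intervalIntegral (t : ℝ) :
    stdNormSurvival t = stdNormSurvival 0 - ∫ u in (0:ℝ)..t, phi u := by
  rcases le_total 0 t with h | h
  · rw [← stdNormSurvival_sub 0 t h]; ring
  · rw [intervalIntegral.integral_symm, ← stdNormSurvival_sub t 0 h]; ring

lemma hasDerivAt_stdNormSurvival (t : ℝ) :
    HasDerivAt stdNormSurvival (-(phi t)) t := by
  have h : HasDerivAt (fun x => ∫ u in (0:ℝ)..x, phi u) (phi t) t := by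
    apply intervalIntegral.integral_hasDerivAt_right
    · exact phi_integrable.intervalIntegrable
    · exact phi_cont.stronglyMeasurableAtFilter _ _
    · exact phi_cont.continuousAt
  have h2 := (hasDerivAt_const t (stdNormSurvival 0)).sub h
  simp only [zero_sub] at h2
  refine h2.congr_of_eventuallyEq (Filter.Eventually.of_forall fun x => ?_)
  exact stdNormSurvival_eq_sub_intervalIntegral x

lemma continuous_stdNormSurvival : Continuous stdNormSurvival := by
  have : Differentiable ℝ stdNormSurvival :=
    fun t => (hasDerivAt_stdNormSurvival t).differentiableAt
  exact this.continuous

lemma stdNormSurvival_strictAnti : StrictAnti stdNormSurvival := by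
  apply strictAnti_of_deriv_neg
  intro t
  rw [(hasDerivAt_stdNormSurvival t).deriv]
  simp [phi_pos t]


/-- The survival function of the chi-squared distribution with one degree of freedom,
`A(t) = 2Φ̄(√t)` for `t ≥ 0`. -/
noncomputable def chiSqOneSurvival (t : ℝ) : ℝ := 2 * stdNormSurvival (Real.sqrt t)

lemma chiSq_pos (t : ℝ) : 0 < chiSqOneSurvival t :=
  mul_pos two_pos (stdNormSurvival_pos _)

lemma chiSq_cont : Continuous chiSqOneSurvival :=
  continuous_const.mul (continuous_stdNormSurvival.comp Real.continuous_sqrt)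

lemma chiSq_zero : chiSqOneSurvival 0 = 1 := by
  rw [chiSqOneSurvival, Real.sqrt_zero, stdNormSurvival_zero]; norm_num

lemma hasDerivAt_chiSq {u : ℝ} (hu : 0 < u) :
    HasDerivAt chiSqOneSurvival (-(phi (Real.sqrt u) / Real.sqrt u)) u := by
  have h1 : HasDerivAt Real.sqrt (1/(2*Real.sqrt u)) u := Real.hasDerivAt_sqrt hu.ne'
  have h2 := (hasDerivAt_stdNormSurvival (Real.sqrt u)).comp u h1
  have h3 := h2.const_mul 2
  have hsu : Real.sqrt u ≠ 0 := (Real.sqrt_pos.2 hu).ne'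
  have e : -(phi (Real.sqrt u) / Real.sqrt u) = 2 * (-phi (Real.sqrt u) * (1 / (2 * Real.sqrt u))) := by
    field_simp
  rw [e]
  exact h3

/-- key positive quantity -/
noncomputable def psiAux (p : ℝ × ℝ) : ℝ :=
  phi p.1 * stdNormSurvival (p.1/p.2)
    - (1/p.2) * phi (p.1/p.2) * stdNormSurvival p.1

lemma psiAux_pos {x z : ℝ} (hx : 0 ≤ x) (hz : 1 < z) : 0 < psiAux (x, z) := by
  have hz0 : 0 < z := lt_trans one_pos hz
  have hxz : x / z ≤ x := by
    rw [div_le_iff₀ hz0]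
    nlinarith
  have hxz0 : 0 ≤ x / z := div_nonneg hx hz0.le
  have hkey := hazard_mono hxz0 hxz
  have h1 : 0 < phi x * stdNormSurvival (x/z) :=
    mul_pos (phi_pos x) (stdNormSurvival_pos _)
  have h2 : (1/z) * (phi (x/z) * stdNormSurvival x) < phi x * stdNormSurvival (x/z) := by
    calc (1/z) * (phi (x/z) * stdNormSurvival x)
        ≤ (1/z) * (phi x * stdNormSurvival (x/z)) := by
          apply mul_le_mul_of_nonneg_left hkey (by positivity)
      _ < 1 * (phi x * stdNormSurvival (x/z)) := by
          apply mul_lt_mul_of_pos_right _ h1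
          rw [div_lt_one hz0]; exact hz
      _ = phi x * stdNormSurvival (x/z) := one_mul _
  simp only [psiAux]
  nlinarith

lemma psiAux_continuousOn : ContinuousOn psiAux {p : ℝ × ℝ | 0 < p.2} := by
  have hdiv : ContinuousOn (fun p : ℝ × ℝ => p.1 / p.2) {p : ℝ × ℝ | 0 < p.2} :=
    continuous_fst.continuousOn.div continuous_snd.continuousOn fun p hp => (hp : 0 < p.2).ne'
  have h1 : ContinuousOn (fun p : ℝ × ℝ => stdNormSurvival (p.1 / p.2))
      {p : ℝ × ℝ | 0 < p.2} := continuous_stdNormSurvival.comp_continuousOn hdiv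
  have h2 : ContinuousOn (fun p : ℝ × ℝ => phi (p.1 / p.2)) {p : ℝ × ℝ | 0 < p.2} :=
    phi_cont.comp_continuousOn hdiv
  have h3 : ContinuousOn (fun p : ℝ × ℝ => 1 / p.2) {p : ℝ × ℝ | 0 < p.2} :=
    continuousOn_const.div continuous_snd.continuousOn fun p hp => (hp : 0 < p.2).ne'
  exact (((phi_cont.comp continuous_fst).continuousOn).mul h1).sub
    ((h3.mul h2).mul ((continuous_stdNormSurvival.comp continuous_fst).continuousOn))


/-- The alternative scale increment `σ²(r)` under the subspace prior. -/
noncomputable def sigmaSqSub (h γ c r : ℝ) : ℝ :=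
  h ^ 2 * max 0 (1 - c * (1 + r) / (γ ^ 2 * h ^ 4)) / (1 + c / (γ * h ^ 2))

/-- The subspace-prior proxy FDP curve minus the level `q`. -/
noncomputable def subspaceProxyF (h γ c q : ℝ) (t δ r : ℝ) : ℝ :=
  (δ + (1 - δ) * chiSqOneSurvival t) /
    ((1 - γ) * chiSqOneSurvival t
      + γ * chiSqOneSurvival (t / (1 + sigmaSqSub h γ c r))) - q

set_option maxHeartbeats 1000000 in
theorem subspace_proxy_root_unique
    (C q γ h c : ℝ) (hC : 0 < C) (hq : q ∈ Set.Ioo (0 : ℝ) 1)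
    (hγ : γ ∈ Set.Ioo (0 : ℝ) 1) (hh : 0 < h) (hc : 0 < c)
    (hstrong : c < γ ^ 2 * h ^ 4) :
    ∃ εr > (0 : ℝ), ∃ δstar ∈ Set.Ioo (0 : ℝ) 1,
      ∀ r ∈ Set.Icc (0 : ℝ) εr, ∀ δ ∈ Set.Ioo (0 : ℝ) δstar,
        StrictAntiOn (fun t => subspaceProxyF h γ c q t δ r) (Set.Ioc 0 C) ∧
        ∀ t₁ ∈ Set.Icc (0 : ℝ) C, ∀ t₂ ∈ Set.Icc (0 : ℝ) C,
          subspaceProxyF h γ c q t₁ δ r = 0 → subspaceProxyF h γ c q t₂ δ r = 0 → t₁ = t₂ := by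
  obtain ⟨hq0, hq1⟩ := hq
  obtain ⟨hγ0, hγ1⟩ := hγ
  have hG0 : (0:ℝ) < γ ^ 2 * h ^ 4 := lt_trans hc hstrong
  have hd0 : (0:ℝ) < 1 + c / (γ * h ^ 2) := by positivity
  set d : ℝ := 1 + c / (γ * h ^ 2) with hd_def
  set a : ℝ := (γ ^ 2 * h ^ 4 - c) / (2 * (γ ^ 2 * h ^ 4)) with ha_def
  have ha0 : 0 < a := by
    apply div_pos (by linarith) (by positivity)
  have ha1 : a ≤ 1 := by
    rw [ha_def, div_le_one (by positivity)]
    nlinarith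
  set s₁ : ℝ := 1 + h ^ 2 * a / d with hs₁_def
  set s₂ : ℝ := 1 + h ^ 2 / d with hs₂_def
  have hs₁1 : 1 < s₁ := by
    rw [hs₁_def]
    have : 0 < h ^ 2 * a / d := by positivity
    linarith
  have hs₁₂ : s₁ ≤ s₂ := by
    rw [hs₁_def, hs₂_def]
    have h1 : h ^ 2 * a ≤ h ^ 2 := by nlinarith
    have h2 := div_le_div_of_nonneg_right (c := d) h1 (by positivity)
    linarith
  -- compact minimum of psiAux
  set z₁ : ℝ := Real.sqrt s₁ with hz₁_def
  set z₂ : ℝ := Real.sqrt s₂ with hz₂_def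
  have hz₁1 : 1 < z₁ := by
    rw [hz₁_def, show (1:ℝ) = Real.sqrt 1 by simp]
    exact Real.sqrt_lt_sqrt zero_le_one hs₁1
  have hz₁₂ : z₁ ≤ z₂ := Real.sqrt_le_sqrt hs₁₂
  set K : Set (ℝ × ℝ) := Icc (0:ℝ) (Real.sqrt C) ×ˢ Icc z₁ z₂ with hK_def
  have hKne : K.Nonempty := ⟨(0, z₁), ⟨⟨le_refl _, Real.sqrt_nonneg C⟩, ⟨le_refl _, hz₁₂⟩⟩⟩
  have hKc : IsCompact K := isCompact_Icc.prod isCompact_Icc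
  have hKsub : K ⊆ {p : ℝ × ℝ | 0 < p.2} := fun p hp =>
    lt_trans one_pos (lt_of_lt_of_le hz₁1 hp.2.1)
  obtain ⟨p₀, hp₀K, hp₀min⟩ := hKc.exists_isMinOn hKne (psiAux_continuousOn.mono hKsub)
  set m : ℝ := psiAux p₀ with hm_def
  have hm0 : 0 < m := psiAux_pos hp₀K.1.1 (lt_of_lt_of_le hz₁1 hp₀K.2.1)
  -- choose εr, δstar
  have hεr0 : (0:ℝ) < (γ ^ 2 * h ^ 4 - c) / (2 * c) := by
    apply div_pos (by linarith) (by linarith)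
  refine ⟨(γ ^ 2 * h ^ 4 - c) / (2 * c), hεr0, min (1/2) (γ * m),
    ⟨lt_min (by norm_num) (by positivity),
      lt_of_le_of_lt (min_le_left _ _) (by norm_num)⟩, ?_⟩
  intro r hr δ hδ
  obtain ⟨hr0, hrε⟩ := hr
  obtain ⟨hδ0, hδs⟩ := hδ
  have hδhalf : δ < 1/2 := lt_of_lt_of_le hδs (min_le_left _ _)
  have hδγm : δ < γ * m := lt_of_lt_of_le hδs (min_le_right _ _)
  -- the scale s and its bounds
  set s : ℝ := 1 + sigmaSqSub h γ c r with hs_def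
  have hcr2 : r * (2 * c) ≤ γ ^ 2 * h ^ 4 - c :=
    (le_div_iff₀ (by linarith)).1 hrε
  have hmaxval : max 0 (1 - c * (1 + r) / (γ ^ 2 * h ^ 4)) = 1 - c * (1 + r) / (γ ^ 2 * h ^ 4) := by
    apply max_eq_right
    rw [sub_nonneg, div_le_one hG0]
    nlinarith
  have hsig : sigmaSqSub h γ c r = h ^ 2 * (1 - c * (1 + r) / (γ ^ 2 * h ^ 4)) / d := by
    rw [sigmaSqSub, hmaxval, hd_def]
  have hrw : 1 - c * (1 + r) / (γ ^ 2 * h ^ 4)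
      = (γ ^ 2 * h ^ 4 - c * (1 + r)) / (γ ^ 2 * h ^ 4) := by
    field_simp
  have hea : a ≤ 1 - c * (1 + r) / (γ ^ 2 * h ^ 4) := by
    rw [ha_def, hrw, div_le_div_iff₀ (by positivity) hG0]
    nlinarith
  have he1 : 1 - c * (1 + r) / (γ ^ 2 * h ^ 4) ≤ 1 := by
    have : 0 ≤ c * (1 + r) / (γ ^ 2 * h ^ 4) := by positivity
    linarith
  have hs1s : s₁ ≤ s := by
    rw [hs₁_def, hs_def, hsig]
    have := div_le_div_of_nonneg_right (c := d)
      (mul_le_mul_of_nonneg_left hea (sq_nonneg h)) (by positivity)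
    linarith
  have hss2 : s ≤ s₂ := by
    rw [hs₂_def, hs_def, hsig]
    have h1 : h ^ 2 * (1 - c * (1 + r) / (γ ^ 2 * h ^ 4)) ≤ h ^ 2 := by
      have := mul_le_mul_of_nonneg_left he1 (sq_nonneg h)
      rwa [mul_one] at this
    have := div_le_div_of_nonneg_right (c := d) h1 (by positivity)
    linarith
  
  have hs1 : 1 < s := lt_of_lt_of_le hs₁1 hs1s
  have hs0 : 0 < s := by linarith
  set z : ℝ := Real.sqrt s with hz_def
  have hz1 : 1 < z := by
    rw [hz_def, show (1:ℝ) = Real.sqrt 1 by simp]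
    exact Real.sqrt_lt_sqrt zero_le_one hs1
  have hz0 : 0 < z := lt_trans one_pos hz1
  have hzz : z * z = s := Real.mul_self_sqrt hs0.le
  have hzmem : z ∈ Icc z₁ z₂ := ⟨Real.sqrt_le_sqrt hs1s, Real.sqrt_le_sqrt hss2⟩
  have hD : ∀ t : ℝ, 0 < (1-γ) * chiSqOneSurvival t + γ * chiSqOneSurvival (t/s) :=
    fun t => add_pos (mul_pos (by linarith) (chiSq_pos _)) (mul_pos hγ0 (chiSq_pos _))
  have hFeq : (fun t => subspaceProxyF h γ c q t δ r)
      = fun t => (δ + (1-δ) * chiSqOneSurvival t)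
        / ((1-γ) * chiSqOneSurvival t + γ * chiSqOneSurvival (t/s)) - q := by
    funext t; rw [subspaceProxyF, ← hs_def]
  have hFc : Continuous (fun t => subspaceProxyF h γ c q t δ r) := by
    rw [hFeq]
    have hnum : Continuous (fun t : ℝ => δ + (1-δ) * chiSqOneSurvival t) :=
      continuous_const.add (continuous_const.mul chiSq_cont)
    have hBc : Continuous (fun t : ℝ => chiSqOneSurvival (t/s)) :=
      chiSq_cont.comp (continuous_id.div_const s)
    have hden : Continuous
        (fun t : ℝ => (1-γ) * chiSqOneSurvival t + γ * chiSqOneSurvival (t/s)) :=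
      (continuous_const.mul chiSq_cont).add (continuous_const.mul hBc)
    exact (hnum.div hden fun t => (hD t).ne').sub continuous_const
  have key : ∀ t ∈ Ioo (0:ℝ) C, deriv (fun t => subspaceProxyF h γ c q t δ r) t < 0 := by
    intro t ht
    obtain ⟨ht0, htC⟩ := ht
    have hx0 : 0 < Real.sqrt t := Real.sqrt_pos.2 ht0
    have hxC : Real.sqrt t ≤ Real.sqrt C := Real.sqrt_le_sqrt htC.le
    have hts : 0 < t / s := div_pos ht0 hs0
    have hsq : Real.sqrt (t/s) = Real.sqrt t / z := by
      rw [hz_def, Real.sqrt_div ht0.le]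
    set x : ℝ := Real.sqrt t with hx_def
    have hA : HasDerivAt chiSqOneSurvival (-(phi x / x)) t := hasDerivAt_chiSq ht0
    have hB0 : HasDerivAt (fun u => chiSqOneSurvival (u/s))
        (-(phi (Real.sqrt (t/s)) / Real.sqrt (t/s)) * (1/s)) t := by
      have h1 := (hasDerivAt_chiSq hts).comp t ((hasDerivAt_id t).div_const s)
      exact h1
    have hB : HasDerivAt (fun u => chiSqOneSurvival (u/s)) (-(phi (x/z) / (x*z))) t := by
      convert hB0 using 1
      rw [hsq, ← hzz]
      field_simp
    have hN : HasDerivAt (fun u => δ + (1-δ) * chiSqOneSurvival u) ((1-δ) * -(phi x / x)) t :=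
      (hA.const_mul (1-δ)).const_add δ
    have hDd : HasDerivAt (fun u => (1-γ) * chiSqOneSurvival u + γ * chiSqOneSurvival (u/s))
        ((1-γ) * -(phi x / x) + γ * -(phi (x/z) / (x*z))) t :=
      (hA.const_mul (1-γ)).add (hB.const_mul γ)
    have hF : HasDerivAt (fun u => (δ + (1-δ) * chiSqOneSurvival u) /
        ((1-γ) * chiSqOneSurvival u + γ * chiSqOneSurvival (u/s)) - q)
        ((((1-δ) * -(phi x / x)) * ((1-γ) * chiSqOneSurvival t + γ * chiSqOneSurvival (t/s))
          - (δ + (1-δ) * chiSqOneSurvival t)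
            * ((1-γ) * -(phi x / x) + γ * -(phi (x/z) / (x*z))))
          / ((1-γ) * chiSqOneSurvival t + γ * chiSqOneSurvival (t/s))^2) t :=
      (hN.div hDd (hD t).ne').sub_const q
    rw [hFeq, hF.deriv]
    apply div_neg_of_neg_of_pos _ (pow_pos (hD t) 2)
    have hAt : chiSqOneSurvival t = 2 * stdNormSurvival x := rfl
    have hAts : chiSqOneSurvival (t/s) = 2 * stdNormSurvival (x/z) := by
      rw [chiSqOneSurvival, hsq]
    have hψ : m ≤ phi x * stdNormSurvival (x/z)
        - (1/z) * phi (x/z) * stdNormSurvival x := by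
      have h1 := isMinOn_iff.1 hp₀min (x, z) ⟨⟨hx0.le, hxC⟩, hzmem⟩
      simp only [psiAux] at h1
      exact h1
    set P := stdNormSurvival x with hP_def
    set Ps := stdNormSurvival (x/z) with hPs_def
    set fx := phi x with hfx_def
    set fs := phi (x/z) with hfs_def
    have hfx1 : fx ≤ 1 := phi_le x
    have hfs1 : fs ≤ 1 := phi_le (x/z)
    have hfx0 : 0 < fx := phi_pos x
    have hfs0 : 0 < fs := phi_pos (x/z)
    rw [hAt, hAts]
    have hrw2 : (1-δ) * -(fx/x) * ((1-γ)*(2*P) + γ*(2*Ps))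
        - (δ + (1-δ)*(2*P)) * ((1-γ)*-(fx/x) + γ*-(fs/(x*z)))
        = (δ * ((1-γ)*fx + γ*(fs/z)) - 2*γ*(1-δ)*(fx*Ps - (1/z)*fs*P)) / x := by
      field_simp
      ring
    rw [hrw2]
    apply div_neg_of_neg_of_pos _ hx0
    have hψ0 : 0 < fx*Ps - (1/z)*fs*P := lt_of_lt_of_le hm0 hψ
    have e1 : fs / z ≤ 1 := by rw [div_le_one hz0]; linarith
    have e2 : δ * ((1-γ)*fx + γ*(fs/z)) ≤ δ := by
      have t1 : (1-γ)*fx ≤ (1-γ)*1 := mul_le_mul_of_nonneg_left hfx1 (by linarith)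
      have t2 : γ*(fs/z) ≤ γ*1 := mul_le_mul_of_nonneg_left e1 hγ0.le
      have t3 : (1-γ)*fx + γ*(fs/z) ≤ 1 := by linarith
      have t4 := mul_le_mul_of_nonneg_left t3 hδ0.le
      rw [mul_one] at t4
      exact t4
    have e3 : γ * m ≤ 2*γ*(1-δ)*(fx*Ps - (1/z)*fs*P) := by
      have h1 : γ * m ≤ γ * (fx*Ps - (1/z)*fs*P) := mul_le_mul_of_nonneg_left hψ hγ0.le
      have h2 : (1:ℝ) ≤ 2*(1-δ) := by linarith
      have h3 := mul_le_mul_of_nonneg_right h2 (mul_pos hγ0 hψ0).le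
      have h4 : 2*(1-δ)*(γ*(fx*Ps - (1/z)*fs*P)) = 2*γ*(1-δ)*(fx*Ps - (1/z)*fs*P) := by ring
      linarith
    linarith
  have hanti : StrictAntiOn (fun t => subspaceProxyF h γ c q t δ r) (Ioc 0 C) := by
    apply strictAntiOn_of_deriv_neg (convex_Ioc 0 C) hFc.continuousOn
    intro t ht
    rw [interior_Ioc] at ht
    exact key t ht
  refine ⟨hanti, ?_⟩
  have hF0 : subspaceProxyF h γ c q 0 δ r = 1 - q := by
    rw [subspaceProxyF, zero_div, chiSq_zero]
    have hden : (1-γ) * 1 + γ * 1 = (1:ℝ) := by ring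
    rw [hden]
    field_simp
    ring
  intro t₁ ht₁ t₂ ht₂ h₁ h₂
  have hmem : ∀ t ∈ Icc (0:ℝ) C, subspaceProxyF h γ c q t δ r = 0 → t ∈ Ioc (0:ℝ) C := by
    intro t ht h0
    rcases eq_or_lt_of_le ht.1 with heq | hlt
    · exfalso
      rw [← heq, hF0] at h0
      linarith
    · exact ⟨hlt, ht.2⟩
  exact hanti.injOn (hmem t₁ ht₁ h₁) (hmem t₂ ht₂ h₂) (h₁.trans h₂.symm)
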